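/- Let R be a binary relation on streams over a field K, and let R̂ be its linear closure, consisting of all pairs (Σᵢ rᵢσᵢ, Σᵢ rᵢτᵢ) with (σᵢ,τᵢ) ∈ R and rᵢ ∈ K. If R is a bisimulation up to linearity (i.e., (σ,τ) ∈ R implies σ(0)=τ(0) and (σ',τ') ∈ R̂), then R̂ is a bisimulation, and hence any two streams related by R are equal. -/

import Mathlib

def sderiv {K : Type*} (σ : ℕ → K) : ℕ → K := fun i => σ (i + 1)

/-- A bisimulation on streams. -/
def IsBisim {K : Type*} (S : (ℕ → K) → (ℕ → K) → Prop) : Prop :=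
  ∀ σ τ : ℕ → K, S σ τ → σ 0 = τ 0 ∧ S (sderiv σ) (sderiv τ)

/-- The linear closure of a relation on streams over a field K. -/
def LinClosure {K : Type*} [Field K] (R : (ℕ → K) → (ℕ → K) → Prop) :
    (ℕ → K) → (ℕ → K) → Prop :=
  fun a b => ∃ (n : ℕ) (r : ℕ → K) (σ τ : ℕ → ℕ → K),
    (∀ i < n, R (σ i) (τ i)) ∧
    a = (fun j => ∑ i ∈ Finset.range n, r i * σ i j) ∧
    b = (fun j => ∑ i ∈ Finset.range n, r i * τ i j)

lemma lc_add {K : Type*} [Field K] {R : (ℕ → K) → (ℕ → K) → Prop} {a b c d : ℕ → K}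
    (h1 : LinClosure R a b) (h2 : LinClosure R c d) :
    LinClosure R (fun j => a j + c j) (fun j => b j + d j) := by
  obtain ⟨n, r, σ, τ, hR, ha, hb⟩ := h1
  obtain ⟨m, s, σ', τ', hR', hc, hd⟩ := h2
  refine ⟨n + m, fun i => if i < n then r i else s (i - n),
    fun i => if i < n then σ i else σ' (i - n),
    fun i => if i < n then τ i else τ' (i - n), ?_, ?_, ?_⟩
  · intro i hi
    by_cases hin : i < n
    · simpa [hin] using hR i hin
    · simp only [hin, if_false]
      exact hR' (i - n) (by omega)
  · subst ha hc
    funext j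
    rw [Finset.sum_range_add]
    congr 1
    · exact Finset.sum_congr rfl fun i hi => by
        simp [Finset.mem_range.mp hi]
    · exact Finset.sum_congr rfl fun i _ => by simp
  · subst hb hd
    funext j
    rw [Finset.sum_range_add]
    congr 1
    · exact Finset.sum_congr rfl fun i hi => by
        simp [Finset.mem_range.mp hi]
    · exact Finset.sum_congr rfl fun i _ => by simp

lemma lc_smul {K : Type*} [Field K] {R : (ℕ → K) → (ℕ → K) → Prop} {a b : ℕ → K}
    (c : K) (h1 : LinClosure R a b) :
    LinClosure R (fun j => c * a j) (fun j => c * b j) := by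
  obtain ⟨n, r, σ, τ, hR, ha, hb⟩ := h1
  exact ⟨n, fun i => c * r i, σ, τ, hR,
    by subst ha; funext j; simp [Finset.mul_sum, mul_assoc],
    by subst hb; funext j; simp [Finset.mul_sum, mul_assoc]⟩

lemma lc_sum {K : Type*} [Field K] {R : (ℕ → K) → (ℕ → K) → Prop}
    (n : ℕ) (r : ℕ → K) (σ τ : ℕ → ℕ → K)
    (h : ∀ i < n, LinClosure R (σ i) (τ i)) :
    LinClosure R (fun j => ∑ i ∈ Finset.range n, r i * σ i j)
      (fun j => ∑ i ∈ Finset.range n, r i * τ i j) := by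
  induction n with
  | zero => exact ⟨0, r, σ, τ, by omega, by simp, by simp⟩
  | succ n ih =>
    have := lc_add (ih fun i hi => h i (by omega)) (lc_smul (r n) (h n (by omega)))
    simpa [Finset.sum_range_succ] using this

theorem bisim_up_to_linearity {K : Type*} [Field K]
    (R : (ℕ → K) → (ℕ → K) → Prop)
    (h : ∀ σ τ : ℕ → K, R σ τ → σ 0 = τ 0 ∧ LinClosure R (sderiv σ) (sderiv τ)) :
    IsBisim (LinClosure R) ∧ ∀ σ τ : ℕ → K, R σ τ → σ = τ := by
  have hbis : IsBisim (LinClosure R) := by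
    rintro a b ⟨n, r, σ, τ, hR, rfl, rfl⟩
    constructor
    · exact Finset.sum_congr rfl fun i hi => by
        rw [(h _ _ (hR i (Finset.mem_range.mp hi))).1]
    · have : ∀ i < n, LinClosure R (sderiv (σ i)) (sderiv (τ i)) :=
        fun i hi => (h _ _ (hR i hi)).2
      exact lc_sum n r (fun i => sderiv (σ i)) (fun i => sderiv (τ i)) this
  refine ⟨hbis, fun σ τ hστ => ?_⟩
  have key : ∀ j (a b : ℕ → K), LinClosure R a b → a j = b j := by
    intro j
    induction j with
    | zero => exact fun a b hab => (hbis a b hab).1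
    | succ j ih => exact fun a b hab => ih _ _ (hbis a b hab).2
  funext j
  exact key j σ τ ⟨1, fun _ => 1, fun _ => σ, fun _ => τ, fun i _ => hστ, by simp, by simp⟩
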